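/- Let N be a nonzero linear subspace of ℝ^{n+1}, let {v_1, …, v_m} be an orthonormal basis of N^⊥, and let x be a unit vector in ℝ^{n+1}. Then the projection distance from x to S_N := S^n ∩ N equals √(Σ_{i=1}^m (x·v_i)^2) = ‖P_{N^⊥} x‖; that is, inf_{v ∈ S_N} √(1 − (x·v)^2) = ‖P_{N^⊥} x‖, where P_{N^⊥} is the orthogonal projection onto N^⊥. -/

import Mathlib

open scoped RealInnerProductSpace

/-- The projection distance from a unit vector `x` to the subsphere `S_N = Sⁿ ∩ N`
(for a nonzero subspace `N` of `ℝ^{n+1}` with orthonormal basis `v` of `Nᗮ`)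
equals `√(Σᵢ (x ⬝ vᵢ)²) = ‖P_{Nᗮ} x‖`. -/
theorem sphere_projection_dist_to_subsphere (n m : ℕ)
    (N : Submodule ℝ (EuclideanSpace ℝ (Fin (n + 1)))) (hN : N ≠ ⊥)
    (v : Fin m → EuclideanSpace ℝ (Fin (n + 1)))
    (hv : Orthonormal ℝ v)
    (hspan : Submodule.span ℝ (Set.range v) = Nᗮ)
    (x : EuclideanSpace ℝ (Fin (n + 1))) (hx : ‖x‖ = 1) :
    sInf ((fun y => Real.sqrt (1 - (⟪x, y⟫) ^ 2)) ''
        {y : EuclideanSpace ℝ (Fin (n + 1)) | ‖y‖ = 1 ∧ y ∈ N}) =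
      Real.sqrt (∑ i, (⟪x, v i⟫) ^ 2) ∧
    Real.sqrt (∑ i, (⟪x, v i⟫) ^ 2) =
      ‖(Submodule.orthogonalProjectionOnto Nᗮ x : EuclideanSpace ℝ (Fin (n + 1)))‖ := by
  classical
  set p : EuclideanSpace ℝ (Fin (n + 1)) := (Submodule.orthogonalProjectionOnto N x :) with hp
  set q : EuclideanSpace ℝ (Fin (n + 1)) := (Submodule.orthogonalProjectionOnto Nᗮ x :) with hq
  have hpq : p + q = x := Submodule.starProjection_add_starProjection_orthogonal (K := N) x
  have hpN : p ∈ N := (Submodule.orthogonalProjectionOnto N x).2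
  have hqN : q ∈ Nᗮ := (Submodule.orthogonalProjectionOnto Nᗮ x).2
  have hinner_pq : ⟪p, q⟫ = 0 := hqN p hpN
  have hnorm : ‖p‖ ^ 2 + ‖q‖ ^ 2 = 1 := by
    have h := norm_add_sq_real p q
    rw [hpq, hx, hinner_pq] at h
    nlinarith
  -- the second equality
  have hmem : ∀ i, v i ∈ Nᗮ := fun i => hspan ▸ Submodule.subset_span (Set.mem_range_self i)
  set w : EuclideanSpace ℝ (Fin (n + 1)) := ∑ i, ⟪v i, x⟫ • v i with hw
  have hwmem : w ∈ Nᗮ := Submodule.sum_mem _ fun i _ => Submodule.smul_mem _ _ (hmem i)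
  have hwj : ∀ j, ⟪w, v j⟫ = ⟪v j, x⟫ := by
    intro j
    rw [hw, sum_inner]
    simp [inner_smul_left, orthonormal_iff_ite.mp hv, Finset.sum_ite_eq']
  have hqw : q = w := by
    refine Submodule.eq_starProjection_of_mem_of_inner_eq_zero hwmem ?_
    intro z hz
    rw [← hspan] at hz
    induction hz using Submodule.span_induction with
    | mem z hz =>
        obtain ⟨j, rfl⟩ := hz
        rw [inner_sub_left, hwj j, real_inner_comm, sub_self]
    | zero => simp
    | add a b _ _ ha hb => rw [inner_add_right, ha, hb, add_zero]
    | smul c a _ ha => rw [inner_smul_right, ha, mul_zero]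
  have hnormw : ‖q‖ ^ 2 = ∑ i, (⟪x, v i⟫) ^ 2 := by
    have h := hv.inner_sum (fun i => ⟪v i, x⟫) (fun i => ⟪v i, x⟫) Finset.univ
    rw [← hw, ← hqw] at h
    rw [← real_inner_self_eq_norm_sq, h]
    exact Finset.sum_congr rfl fun i _ => by
      rw [real_inner_comm]; ring_nf; simp [sq]
  have key2 : Real.sqrt (∑ i, (⟪x, v i⟫) ^ 2) = ‖q‖ := by
    rw [← hnormw, Real.sqrt_sq (norm_nonneg q)]
  refine ⟨?_, key2⟩
  rw [key2]
  -- lower bound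
  have hlb : ∀ a ∈ ((fun y => Real.sqrt (1 - (⟪x, y⟫) ^ 2)) ''
      {y : EuclideanSpace ℝ (Fin (n + 1)) | ‖y‖ = 1 ∧ y ∈ N}), ‖q‖ ≤ a := by
    rintro a ⟨y, ⟨hy1, hyN⟩, rfl⟩
    have hxy : ⟪x, y⟫ = ⟪p, y⟫ := by
      have h0 : ⟪q, y⟫ = 0 := by rw [real_inner_comm]; exact hqN y hyN
      rw [← hpq, inner_add_left, h0, add_zero]
    have hcs : (⟪x, y⟫) ^ 2 ≤ ‖p‖ ^ 2 := by
      rw [hxy]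
      have := abs_real_inner_le_norm p y
      rw [hy1, mul_one] at this
      calc (⟪p, y⟫) ^ 2 = |⟪p, y⟫| ^ 2 := (sq_abs _).symm
        _ ≤ ‖p‖ ^ 2 := pow_le_pow_left₀ (abs_nonneg _) this 2
    have : ‖q‖ ^ 2 ≤ 1 - (⟪x, y⟫) ^ 2 := by nlinarith
    calc ‖q‖ = Real.sqrt (‖q‖ ^ 2) := (Real.sqrt_sq (norm_nonneg q)).symm
      _ ≤ Real.sqrt (1 - (⟪x, y⟫) ^ 2) := Real.sqrt_le_sqrt this
  -- exhibit a witness achieving ‖q‖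
  have hwit : ∃ y : EuclideanSpace ℝ (Fin (n + 1)), (‖y‖ = 1 ∧ y ∈ N) ∧ Real.sqrt (1 - (⟪x, y⟫) ^ 2) = ‖q‖ := by
    by_cases hp0 : p = 0
    · obtain ⟨y0, hy0N, hy0⟩ := Submodule.exists_mem_ne_zero_of_ne_bot hN
      refine ⟨‖y0‖⁻¹ • y0, ⟨norm_smul_inv_norm hy0, Submodule.smul_mem _ _ hy0N⟩, ?_⟩
      have hq1 : ‖q‖ ^ 2 = 1 := by rw [hp0] at hnorm; simpa using hnorm
      have hxy : ⟪x, ‖y0‖⁻¹ • y0⟫ = 0 := by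
        rw [← hpq, hp0, zero_add, inner_smul_right, real_inner_comm,
          hqN y0 hy0N, mul_zero]
      rw [hxy]
      simp only [ne_eq, OfNat.ofNat_ne_zero, not_false_eq_true, zero_pow, sub_zero,
        Real.sqrt_one]
      nlinarith [norm_nonneg q]
    · refine ⟨‖p‖⁻¹ • p, ⟨norm_smul_inv_norm hp0, Submodule.smul_mem _ _ hpN⟩, ?_⟩
      have hxp : ⟪x, p⟫ = ‖p‖ ^ 2 := by
        rw [← hpq, inner_add_left, real_inner_self_eq_norm_sq, real_inner_comm,
          hinner_pq, add_zero]
      have hxy : ⟪x, ‖p‖⁻¹ • p⟫ = ‖p‖ := by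
        rw [inner_smul_right, hxp, pow_two, ← mul_assoc,
          inv_mul_cancel₀ (norm_ne_zero_iff.mpr hp0), one_mul]
      rw [hxy]
      have : 1 - ‖p‖ ^ 2 = ‖q‖ ^ 2 := by linarith
      rw [this, Real.sqrt_sq (norm_nonneg q)]
  obtain ⟨y, hymem, hyval⟩ := hwit
  refine le_antisymm ?_ ?_
  · exact csInf_le ⟨0, fun a ha => le_trans (norm_nonneg q) (hlb a ha)⟩
      ⟨y, hymem, hyval⟩
  · exact le_csInf ⟨_, ⟨y, hymem, rfl⟩⟩ hlb
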